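/- Let f = ∏_{i=1}^d (X − ζᵢ) ∈ ℂ[X] with ζᵢ pairwise distinct. The classes of the differential forms dX/(X − ζᵢ), 1 ≤ i ≤ d, are linearly independent in the quotient Ω_{ℂ[X]_f} / d(ℂ[X]_f); that is, if ∑ᵢ cᵢ/(X − ζᵢ) = h' for some cᵢ ∈ ℂ and h ∈ ℂ[X]_f, then all cᵢ = 0. -/
import Mathlib


open Polynomial

/-- Linear independence of the classes of `dX/(X − ζᵢ)` modulo exact forms: if
`∑ᵢ cᵢ/(X − ζᵢ) = h'` for some `h = p/f^k ∈ ℂ[X]_f` (with derivative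
`h' = (p'·f^k − p·(f^k)')/f^{2k}`), then all `cᵢ = 0`. -/
theorem simple_fractions_independent_mod_derivatives
    (d : ℕ) (ζ : Fin d → ℂ) (hζ : Function.Injective ζ)
    (f : Polynomial ℂ) (hf : f = ∏ i : Fin d, (X - C (ζ i)))
    (c : Fin d → ℂ) (p : Polynomial ℂ) (k : ℕ)
    (h : ∑ i : Fin d, RatFunc.C (c i) /
          algebraMap (Polynomial ℂ) (RatFunc ℂ) (X - C (ζ i)) =
        algebraMap (Polynomial ℂ) (RatFunc ℂ)
            (derivative p * f ^ k - p * derivative (f ^ k)) /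
          (algebraMap (Polynomial ℂ) (RatFunc ℂ) f) ^ (2 * k)) :
    ∀ i, c i = 0 := by
  classical
  intro i
  set A := algebraMap (Polynomial ℂ) (RatFunc ℂ) with hA
  have hfm : f.Monic := hf ▸ monic_prod_of_monic _ _ fun j _ => monic_X_sub_C _
  have hf0 : f ≠ 0 := hfm.ne_zero
  have hAinj : Function.Injective A := RatFunc.algebraMap_injective ℂ
  have hAne : ∀ q : Polynomial ℂ, q ≠ 0 → A q ≠ 0 := fun q hq =>
    (map_ne_zero_iff A hAinj).mpr hq
  set g : Polynomial ℂ :=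
    ∑ j : Fin d, C (c j) * ∏ l ∈ Finset.univ.erase j, (X - C (ζ l)) with hg
  set N : Polynomial ℂ := derivative p * f ^ k - p * derivative (f ^ k) with hN
  -- rewrite the sum of simple fractions over the common denominator `f`
  have hsum : (∑ j : Fin d, RatFunc.C (c j) / A (X - C (ζ j))) = A g / A f := by
    rw [hg, map_sum, Finset.sum_div]
    refine Finset.sum_congr rfl fun j _ => ?_
    have hfj : f = (X - C (ζ j)) * ∏ l ∈ Finset.univ.erase j, (X - C (ζ l)) := by
      rw [hf, ← Finset.mul_prod_erase _ _ (Finset.mem_univ j)]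
    rw [div_eq_div_iff (hAne _ (X_sub_C_ne_zero _)) (hAne _ hf0),
      ← RatFunc.algebraMap_C (c j), ← map_mul, ← map_mul]
    exact congrArg A (by rw [hfj]; ring)
  -- clear denominators: polynomial identity
  have E : g * f ^ (2 * k) = N * f := by
    rw [hsum, div_eq_div_iff (hAne _ hf0) (pow_ne_zero _ (hAne _ hf0))] at h
    apply hAinj
    rw [map_mul, map_mul, map_pow]
    exact h
  -- evaluation of g at ζ i
  have hge : eval (ζ i) g = c i * ∏ l ∈ Finset.univ.erase i, (ζ i - ζ l) := by
    rw [hg, eval_finset_sum, Finset.sum_eq_single i]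
    · simp [eval_prod]
    · intro j _ hji
      rw [eval_mul]
      apply mul_eq_zero_of_right
      rw [eval_prod]
      refine Finset.prod_eq_zero (Finset.mem_erase.mpr ⟨hji.symm, Finset.mem_univ i⟩) ?_
      simp
    · simp
  have hprodne : (∏ l ∈ Finset.univ.erase i, (ζ i - ζ l)) ≠ 0 :=
    Finset.prod_ne_zero_iff.mpr fun l hl =>
      sub_ne_zero.mpr fun hle => (Finset.mem_erase.mp hl).1 (hζ hle.symm)
  suffices hgz : eval (ζ i) g = 0 by
    rw [hge] at hgz
    exact (mul_eq_zero.mp hgz).resolve_right hprodne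
  -- notation at the point ζ i
  set a : ℂ := ζ i with ha
  set t : Polynomial ℂ := X - C a with htdef
  set u : Polynomial ℂ := ∏ l ∈ Finset.univ.erase i, (X - C (ζ l)) with hu
  have hfu : f = t * u := by
    rw [hf, hu, htdef, ha, ← Finset.mul_prod_erase _ _ (Finset.mem_univ i)]
  have hta : eval a t = 0 := by simp [htdef]
  have hua : eval a u ≠ 0 := by
    rw [hu, eval_prod]
    refine Finset.prod_ne_zero_iff.mpr fun l hl => ?_
    simpa using sub_ne_zero.mpr fun hle => (Finset.mem_erase.mp hl).1 (hζ hle.symm)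
  have ht0 : t ≠ 0 := X_sub_C_ne_zero a
  have hfd : derivative f = u + t * derivative u := by
    rw [hfu, derivative_mul, htdef, derivative_sub, derivative_X, derivative_C,
      sub_zero, one_mul]
  -- case k = 0
  rcases Nat.eq_zero_or_pos k with hk0 | hkpos
  · subst hk0
    simp only [hN, pow_zero, mul_zero, mul_one, derivative_one, mul_zero, sub_zero] at E
    rw [E, eval_mul, hfu, eval_mul, hta, zero_mul, mul_zero]
  -- case k ≥ 1
  have E2 : g * f ^ k = derivative p * f - C (k : ℂ) * p * derivative f := by
    apply mul_right_cancel₀ (pow_ne_zero k hf0)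
    rw [hN, derivative_pow] at E
    obtain ⟨k', rfl⟩ := Nat.exists_eq_add_of_lt hkpos
    simp only [zero_add] at E ⊢
    rw [show 2 * (k' + 1) = (k' + 1) + (k' + 1) by ring, pow_add] at E
    rw [show k' + 1 - 1 = k' by omega] at E
    calc g * f ^ (k' + 1) * f ^ (k' + 1)
        = g * (f ^ (k' + 1) * f ^ (k' + 1)) := by ring
      _ = (derivative p * f ^ (k' + 1) -
            p * (C ((k' + 1 : ℕ) : ℂ) * f ^ k' * derivative f)) * f := E
      _ = (derivative p * f - C ((k' + 1 : ℕ) : ℂ) * p * derivative f) * f ^ (k' + 1) := by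
            ring
  by_contra hga
  -- p ≠ 0, else g = 0
  have hp : p ≠ 0 := by
    rintro rfl
    simp only [derivative_zero, zero_mul, mul_zero, zero_sub, neg_zero, sub_zero] at E2
    rcases mul_eq_zero.mp E2 with hgz | hfz
    · exact hga (by rw [hgz, eval_zero])
    · exact pow_ne_zero k hf0 hfz
  obtain ⟨q, hpq, hqnd⟩ := p.exists_eq_pow_rootMultiplicity_mul_and_not_dvd hp a
  obtain ⟨m, hpq⟩ : ∃ m, p = (X - C a) ^ m * q := ⟨_, hpq⟩
  have hqa : eval a q ≠ 0 := fun hqz => hqnd (dvd_iff_isRoot.mpr hqz)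
  -- the key decomposition of the right-hand side
  have hdec : derivative p * f - C (k : ℂ) * p * derivative f
      = t ^ m * (C ((m : ℂ) - (k : ℂ)) * (q * u)
          + t * (derivative q * u - C (k : ℂ) * (q * derivative u))) := by
    have hC : C ((m : ℂ) - (k : ℂ)) = C ((m : ℕ) : ℂ) - C ((k : ℕ) : ℂ) := by
      rw [map_sub]
    rw [hC]
    cases m with
    | zero =>
      rw [pow_zero, one_mul] at hpq
      rw [hpq, hfd, hfu]
      simp only [Nat.cast_zero, map_zero, zero_sub]
      ring
    | succ m' =>
      have hdp : derivative p = C ((m' + 1 : ℕ) : ℂ) * t ^ m' * q + t ^ (m' + 1) * derivative q := by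
        rw [hpq, derivative_mul, derivative_pow, htdef, derivative_sub, derivative_X,
          derivative_C, sub_zero, mul_one, Nat.add_sub_cancel]
      rw [hdp, hpq, hfd, hfu]
      ring
  rw [hdec] at E2
  rcases lt_or_ge m k with hmk | hmk
  · -- m < k : the pole order of the "derivative" is too small
    have hdv : t ^ (m + 1) ∣ t ^ m *
        (C ((m : ℂ) - (k : ℂ)) * (q * u)
          + t * (derivative q * u - C (k : ℂ) * (q * derivative u))) := by
      rw [← E2, hfu, mul_pow]
      exact dvd_mul_of_dvd_right (dvd_mul_of_dvd_left (pow_dvd_pow t hmk) _) _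
    have hdv2 : t ∣ C ((m : ℂ) - (k : ℂ)) * (q * u)
        + t * (derivative q * u - C (k : ℂ) * (q * derivative u)) := by
      refine (mul_dvd_mul_iff_left (pow_ne_zero m ht0)).mp ?_
      rw [← pow_succ]
      exact hdv
    have := dvd_iff_isRoot.mp hdv2
    simp only [IsRoot, eval_add, eval_mul, eval_C, hta, zero_mul, add_zero] at this
    rcases mul_eq_zero.mp this with h1 | h2
    · exact (sub_ne_zero.mpr (by exact_mod_cast hmk.ne)) h1
    · rcases mul_eq_zero.mp h2 with h3 | h4
      · exact hqa h3
      · exact hua h4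
  · -- m ≥ k : the "derivative" side is divisible by t^(k+1), but g f^k is not
    have hdv : t ^ (k + 1) ∣ t ^ m *
        (C ((m : ℂ) - (k : ℂ)) * (q * u)
          + t * (derivative q * u - C (k : ℂ) * (q * derivative u))) := by
      rcases eq_or_lt_of_le hmk with heq | hlt
      · rw [← heq, sub_self, map_zero, zero_mul, zero_add]
        exact ⟨derivative q * u - C (k : ℂ) * (q * derivative u), by ring⟩
      · exact dvd_mul_of_dvd_left (pow_dvd_pow t hlt) _
    rw [← E2, hfu, mul_pow] at hdv
    have hdv2 : t ∣ g * u ^ k :=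
      (mul_dvd_mul_iff_left (pow_ne_zero k ht0)).mp (by
        rw [← pow_succ, show t ^ k * (g * u ^ k) = g * (t ^ k * u ^ k) by ring]
        exact hdv)
    have := dvd_iff_isRoot.mp hdv2
    rw [IsRoot, eval_mul, eval_pow] at this
    rcases mul_eq_zero.mp this with h1 | h2
    · exact hga h1
    · exact hua (pow_eq_zero_iff (by omega)|>.mp h2)
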